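/- The identity μ^(e) = μ² * μ₂ * u holds as Dirichlet convolutions, where μ₂(n) = μ(m) if n = m² and μ₂(n) = 0 otherwise, and u = μ^(e) * λ * E₂. -/
import Mathlib


open Nat ArithmeticFunction Finset
open scoped Classical

/-- `μ^(e)` as an arithmetic function. -/
noncomputable def muE : ArithmeticFunction ℤ :=
  ⟨fun n => if n = 0 then 0 else ∏ p ∈ n.primeFactors, moebius (n.factorization p),
    by simp⟩

/-- The Liouville function `λ(n) = (-1)^{Ω(n)}`. -/
noncomputable def lam : ArithmeticFunction ℤ :=
  ⟨fun n => if n = 0 then 0 else (-1) ^ cardFactors n, by simp⟩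

/-- The characteristic function of perfect squares. -/
noncomputable def E2 : ArithmeticFunction ℤ :=
  ⟨fun n => if n ≠ 0 ∧ IsSquare n then 1 else 0, by simp⟩

/-- `μ²(n) = μ(n)²`. -/
noncomputable def muSq : ArithmeticFunction ℤ :=
  ⟨fun n => (moebius n) ^ 2, by simp⟩

/-- `μ₂(n) = μ(m)` if `n = m²`, and `0` otherwise. -/
noncomputable def mu2 : ArithmeticFunction ℤ :=
  ⟨fun n => if IsSquare n then moebius (Nat.sqrt n) else 0, by simp⟩

/-! ### Auxiliary lemmas -/

lemma lam_apply {n : ℕ} : lam n = if n = 0 then 0 else (-1 : ℤ) ^ cardFactors n := rfl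

lemma E2_apply {n : ℕ} : E2 n = if n ≠ 0 ∧ IsSquare n then 1 else 0 := rfl

lemma muSq_apply {n : ℕ} : muSq n = (moebius n) ^ 2 := rfl

lemma mu2_apply {n : ℕ} : mu2 n = if IsSquare n then moebius (Nat.sqrt n) else 0 := rfl

lemma isSquare_mul_iff {m n : ℕ} (hm : m ≠ 0) (hn : n ≠ 0) (h : m.Coprime n) :
    IsSquare (m * n) ↔ IsSquare m ∧ IsSquare n := by
  constructor
  · rintro ⟨c, hc⟩
    have hgcd : IsUnit (Nat.gcd m n) := by rw [Nat.isUnit_iff]; exact h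
    have hc2 : m * n = c ^ 2 := by rw [hc, sq]
    obtain ⟨d, hd⟩ := exists_eq_pow_of_mul_eq_pow hgcd hc2
    have hgcd' : IsUnit (Nat.gcd n m) := by rw [Nat.isUnit_iff]; exact h.symm
    obtain ⟨e, he⟩ := exists_eq_pow_of_mul_eq_pow hgcd' (by rwa [mul_comm] at hc2)
    exact ⟨⟨d, by rw [hd, sq]⟩, ⟨e, by rw [he, sq]⟩⟩
  · rintro ⟨hs, ht⟩
    exact hs.mul ht

lemma isSquare_prime_pow_iff {p : ℕ} (hp : p.Prime) (k : ℕ) :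
    IsSquare (p ^ k) ↔ Even k := by
  constructor
  · rintro ⟨r, hr⟩
    have hpk : p ^ k ≠ 0 := pow_ne_zero k hp.pos.ne'
    have hr0 : r ≠ 0 := by rintro rfl; exact hpk (by simpa using hr)
    have := congrArg (fun n => n.factorization p) hr
    simp only [Nat.Prime.factorization_pow hp, Finsupp.smul_apply,
      Nat.factorization_mul hr0 hr0, Finsupp.coe_add, Pi.add_apply,
      Finsupp.single_eq_same] at this
    exact ⟨r.factorization p, this⟩
  · intro hk
    exact hk.isSquare_pow p

lemma mul_apply_prime_pow (f g : ArithmeticFunction ℤ) {p : ℕ} (hp : p.Prime) (k : ℕ) :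
    (f * g) (p ^ k) = ∑ i ∈ range (k + 1), f (p ^ i) * g (p ^ (k - i)) := by
  rw [mul_apply, Nat.sum_divisorsAntidiagonal (f · * g ·),
    Nat.sum_divisors_prime_pow hp]
  refine Finset.sum_congr rfl fun i hi => ?_
  rw [mem_range, Nat.lt_succ_iff] at hi
  rw [Nat.pow_div hi hp.pos]

lemma lam_prime_pow {p : ℕ} (hp : p.Prime) (k : ℕ) : lam (p ^ k) = (-1 : ℤ) ^ k := by
  rw [lam_apply, if_neg (pow_ne_zero k hp.pos.ne'), cardFactors_apply_prime_pow hp]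

lemma E2_prime_pow {p : ℕ} (hp : p.Prime) (k : ℕ) :
    E2 (p ^ k) = if Even k then 1 else 0 := by
  rw [E2_apply]
  simp only [isSquare_prime_pow_iff hp, ne_eq, pow_ne_zero k hp.pos.ne', not_false_iff, true_and]

lemma muSq_prime_pow {p : ℕ} (hp : p.Prime) (k : ℕ) :
    muSq (p ^ k) = if k ≤ 1 then 1 else 0 := by
  rw [muSq_apply]
  rcases Nat.eq_zero_or_pos k with rfl | hk
  · simp
  rw [moebius_apply_prime_pow hp hk.ne']
  rcases eq_or_ne k 1 with rfl | hk1
  · simp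
  · rw [if_neg hk1, if_neg (by omega)]
    ring

lemma mu2_prime_pow {p : ℕ} (hp : p.Prime) (k : ℕ) :
    mu2 (p ^ k) = if k = 0 then 1 else if k = 2 then -1 else 0 := by
  rcases Nat.even_or_odd k with he | ho
  · obtain ⟨m, hm⟩ := he
    have hpk : p ^ k = (p ^ m) * (p ^ m) := by rw [← pow_add, hm]
    rw [mu2_apply, if_pos ⟨p ^ m, hpk⟩, hpk, Nat.sqrt_eq]
    rcases Nat.eq_zero_or_pos m with rfl | hm0
    · simp [hm]
    rw [moebius_apply_prime_pow hp hm0.ne']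
    rcases eq_or_ne m 1 with rfl | hm1
    · simp [hm]
    · rw [if_neg hm1, if_neg (by omega), if_neg (by omega)]
  · have hk0 : k ≠ 0 := by rintro rfl; exact (by decide : ¬ Odd 0) ho
    have hk2 : k ≠ 2 := by rintro rfl; exact (by decide : ¬ Odd 2) ho
    rw [mu2_apply,
      if_neg (fun hsq => (Nat.not_even_iff_odd.mpr ho) ((isSquare_prime_pow_iff hp k).mp hsq)),
      if_neg hk0, if_neg hk2]

lemma muSq_mul_lam : muSq * lam = 1 := by
  have hmuSq : muSq.IsMultiplicative := by
    refine ⟨by simp [muSq_apply], fun {m n} h => ?_⟩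
    simp [muSq_apply, isMultiplicative_moebius.map_mul_of_coprime h, mul_pow]
  have hlam : lam.IsMultiplicative := by
    refine ⟨by simp [lam_apply], fun {m n} h => ?_⟩
    rcases eq_or_ne m 0 with rfl | hm
    · simp [lam_apply]
    rcases eq_or_ne n 0 with rfl | hn
    · simp [lam_apply]
    simp [lam_apply, hm, hn, mul_eq_zero, cardFactors_mul hm hn, pow_add]
  rw [ArithmeticFunction.IsMultiplicative.eq_iff_eq_on_prime_powers _ (hmuSq.mul hlam) _
    isMultiplicative_one]
  intro p k hp
  rw [mul_apply_prime_pow _ _ hp, one_apply]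
  have hsummand : ∀ i ∈ range (k + 1),
      muSq (p ^ i) * lam (p ^ (k - i)) =
        (if i = 0 then (-1 : ℤ) ^ k else 0) + (if i = 1 then (-1 : ℤ) ^ (k - 1) else 0) := by
    intro i hi
    rw [muSq_prime_pow hp, lam_prime_pow hp]
    rcases eq_or_ne i 0 with rfl | h0
    · simp
    rcases eq_or_ne i 1 with rfl | h1
    · simp
    · rw [if_neg (by omega), if_neg h0, if_neg h1]; ring
  rw [Finset.sum_congr rfl hsummand, Finset.sum_add_distrib,
    Finset.sum_ite_eq' _ 0, Finset.sum_ite_eq' _ 1]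
  rcases Nat.eq_zero_or_pos k with rfl | hk
  · simp
  · rw [if_pos (by simp), if_pos (by rw [mem_range]; omega),
      if_neg (Nat.one_lt_pow hk.ne' hp.one_lt).ne']
    rcases Nat.even_or_odd k with he | ho
    · rw [he.neg_one_pow, (Nat.Even.sub_odd hk he odd_one).neg_one_pow]; ring
    · rw [ho.neg_one_pow, (Nat.Odd.sub_odd ho odd_one).neg_one_pow]; ring

lemma mu2_mul_E2 : mu2 * E2 = 1 := by
  have hmu2 : mu2.IsMultiplicative := by
    refine ⟨by simp [mu2_apply], fun {m n} h => ?_⟩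
    rcases eq_or_ne m 0 with rfl | hm
    · have : n = 1 := by simpa using h
      simp [this, mu2_apply, Nat.sqrt_eq_zero]
    rcases eq_or_ne n 0 with rfl | hn
    · have : m = 1 := by simpa [Nat.coprime_zero_right] using h
      simp [this, mu2_apply, Nat.sqrt_eq_zero]
    by_cases hsq : IsSquare m ∧ IsSquare n
    · obtain ⟨⟨a, ha⟩, ⟨b, hb⟩⟩ := hsq
      have hab : a.Coprime b := by
        have h' := h
        rw [ha, hb] at h'
        exact (Nat.Coprime.coprime_dvd_left (dvd_mul_right a a)
          (Nat.Coprime.coprime_dvd_right (dvd_mul_right b b) h'))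
      have h1 : mu2 m = moebius a := by
        rw [mu2_apply, if_pos ⟨a, ha⟩, ha, Nat.sqrt_eq]
      have h2 : mu2 n = moebius b := by
        rw [mu2_apply, if_pos ⟨b, hb⟩, hb, Nat.sqrt_eq]
      have hmn : m * n = (a * b) * (a * b) := by rw [ha, hb]; ring
      have h3 : mu2 (m * n) = moebius (a * b) := by
        rw [mu2_apply, if_pos ⟨a * b, hmn⟩, hmn, Nat.sqrt_eq]
      rw [h1, h2, h3, isMultiplicative_moebius.map_mul_of_coprime hab]
    · have hns : ¬ IsSquare (m * n) := by
        rw [isSquare_mul_iff hm hn h]; exact hsq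
      rw [mu2_apply, if_neg hns]
      rw [not_and_or] at hsq
      rcases hsq with hsq | hsq
      · rw [mu2_apply (n := m), if_neg hsq, zero_mul]
      · rw [mu2_apply (n := n), if_neg hsq, mul_zero]
  have hE2 : E2.IsMultiplicative := by
    refine ⟨by simp [E2_apply], fun {m n} h => ?_⟩
    rcases eq_or_ne m 0 with rfl | hm
    · simp [E2_apply]
    rcases eq_or_ne n 0 with rfl | hn
    · simp [E2_apply]
    rw [E2_apply, E2_apply, E2_apply]
    by_cases hsq : IsSquare m ∧ IsSquare n
    · rw [if_pos ⟨mul_ne_zero hm hn, (isSquare_mul_iff hm hn h).mpr hsq⟩,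
        if_pos ⟨hm, hsq.1⟩, if_pos ⟨hn, hsq.2⟩, mul_one]
    · have hns : ¬ IsSquare (m * n) := by
        rw [isSquare_mul_iff hm hn h]; exact hsq
      rw [if_neg (show ¬(m * n ≠ 0 ∧ IsSquare (m * n)) from fun hc => hns hc.2)]
      rw [not_and_or] at hsq
      rcases hsq with hsq | hsq
      · rw [if_neg (show ¬(m ≠ 0 ∧ IsSquare m) from fun hc => hsq hc.2), zero_mul]
      · rw [if_neg (show ¬(n ≠ 0 ∧ IsSquare n) from fun hc => hsq hc.2), mul_zero]
  rw [ArithmeticFunction.IsMultiplicative.eq_iff_eq_on_prime_powers _ (hmu2.mul hE2) _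
    isMultiplicative_one]
  intro p k hp
  rw [mul_apply_prime_pow _ _ hp, one_apply]
  have hsummand : ∀ i ∈ range (k + 1),
      mu2 (p ^ i) * E2 (p ^ (k - i)) =
        (if i = 0 then (if Even k then (1 : ℤ) else 0) else 0) +
        (if i = 2 then (if Even (k - 2) then (-1 : ℤ) else 0) else 0) := by
    intro i hi
    rw [mu2_prime_pow hp, E2_prime_pow hp]
    rcases eq_or_ne i 0 with rfl | h0
    · simp
    rcases eq_or_ne i 2 with rfl | h2
    · simp only [if_neg (by norm_num : (2 : ℕ) ≠ 0), if_pos rfl, zero_add]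
      by_cases he : Even (k - 2) <;> simp [he]
    · rw [if_neg h0, if_neg h2, if_neg h0, if_neg h2]; ring
  rw [Finset.sum_congr rfl hsummand, Finset.sum_add_distrib,
    Finset.sum_ite_eq' _ 0, Finset.sum_ite_eq' _ 2]
  rcases Nat.eq_zero_or_pos k with rfl | hk
  · simp
  rw [if_pos (show (0 : ℕ) ∈ range (k + 1) by simp),
    if_neg (Nat.one_lt_pow hk.ne' hp.one_lt).ne']
  rcases lt_or_ge k 2 with h2 | h2
  · rw [if_neg (show (2 : ℕ) ∉ range (k + 1) by rw [mem_range]; omega)]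
    have hk1 : k = 1 := by omega
    simp [hk1]
  · rw [if_pos (show (2 : ℕ) ∈ range (k + 1) by rw [mem_range]; omega)]
    have hiff : Even (k - 2) ↔ Even k := by
      rw [Nat.even_sub h2]; simp
    simp only [hiff]
    split <;> ring

theorem muE_eq_muSq_mul_mu2_mul_u :
    muE = muSq * mu2 * (muE * lam * E2) := by
  have h : muSq * mu2 * (muE * lam * E2) = muE * ((muSq * lam) * (mu2 * E2)) := by ring
  rw [h, muSq_mul_lam, mu2_mul_E2, mul_one, mul_one]
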